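/- (Mirror marginal price relation, discharge–discharge pair with slack above.) Let T ≥ 1 be a horizon, C : {1,…,T} → ℝ prices, S^end ∈ ℝ, and let x = (p^C, p^D, s) ∈ X(S^end) be an optimal schedule of F(T, C, S^end). Suppose t₁ < t₂ are in {1,…,T} with p^D_{t₁} > 0, p^C_{t₂} = 0, p^D_{t₂} < P̄^D, and s_t < S̄ for all t ∈ {t₁,…,t₂−1}. Then C_{t₁} ≥ ρ^{t₂−t₁} C_{t₂}. -/
import Mathlib


open Finset

set_option maxHeartbeats 1600000

/-- Parameters of the energy storage system. -/
structure Params where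
  Δt : ℝ
  ρ : ℝ
  ηC : ℝ
  ηD : ℝ
  PC : ℝ
  PD : ℝ
  Slo : ℝ
  Shi : ℝ
  Sinit : ℝ

/-- Validity of the parameters: Δt > 0, ρ ∈ (0,1], ηC, ηD ∈ (0,1],
P̄^C > 0, P̄^D > 0, S̲ ≤ S̄, S̲ ≤ S^init ≤ S̄. -/
def Params.Valid (P : Params) : Prop :=
  0 < P.Δt ∧ 0 < P.ρ ∧ P.ρ ≤ 1 ∧ 0 < P.ηC ∧ P.ηC ≤ 1 ∧ 0 < P.ηD ∧ P.ηD ≤ 1 ∧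
  0 < P.PC ∧ 0 < P.PD ∧ P.Slo ≤ P.Shi ∧ P.Slo ≤ P.Sinit ∧ P.Sinit ≤ P.Shi

/-- A feasible schedule over the horizon {1,…,T}, with the convention s 0 = S^init. -/
def Feasible (P : Params) (T : ℕ) (pC pD s : ℕ → ℝ) : Prop :=
  s 0 = P.Sinit ∧
  ∀ t : ℕ, 1 ≤ t → t ≤ T →
    (s t = P.ρ * s (t - 1) + P.Δt * (P.ηC * pC t - pD t / P.ηD) ∧
     P.Slo ≤ s t ∧ s t ≤ P.Shi ∧
     0 ≤ pC t ∧ pC t ≤ P.PC ∧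
     0 ≤ pD t ∧ pD t ≤ P.PD ∧
     pC t * pD t = 0)

/-- Profit Z = Σ_{t=1}^{T} Δt C_t (p^D_t − p^C_t). -/
noncomputable def profit (P : Params) (T : ℕ) (C pC pD : ℕ → ℝ) : ℝ :=
  ∑ t ∈ Finset.Icc 1 T, P.Δt * C t * (pD t - pC t)

/-- Optimal schedule of F(T, C, S^end): feasible, meets the terminal constraint
s_T = S^end, and maximizes profit among such schedules. -/
def Optimal (P : Params) (T : ℕ) (C : ℕ → ℝ) (Send : ℝ) (pC pD s : ℕ → ℝ) : Prop :=
  Feasible P T pC pD s ∧ s T = Send ∧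
  ∀ qC qD r : ℕ → ℝ, Feasible P T qC qD r → r T = Send →
    profit P T C qC qD ≤ profit P T C pC pD

/-- Minimum reachable level S̲_T at the end of the planning horizon. -/
noncomputable def SloT (P : Params) (T : ℕ) : ℝ :=
  max P.Slo (P.ρ ^ T * P.Sinit - P.Δt * (P.PD / P.ηD) * ∑ t ∈ Finset.range T, P.ρ ^ t)

/-- Maximum reachable level S̄_T at the end of the planning horizon. -/
noncomputable def ShiT (P : Params) (T : ℕ) : ℝ :=
  min P.Shi (P.ρ ^ T * P.Sinit + P.Δt * P.ηC * P.PC * ∑ t ∈ Finset.range T, P.ρ ^ t)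

/-- Mirror marginal price relation (discharge–discharge pair with slack above):
if an optimal schedule discharges at t₁, does not charge at t₂ > t₁ and has
slack discharge capacity there, with the state of energy strictly below S̄ on
{t₁,…,t₂−1}, then C_{t₁} ≥ ρ^{t₂−t₁} C_{t₂}. -/
theorem mirror_discharge_discharge (P : Params) (hP : P.Valid) (T : ℕ) (hT : 1 ≤ T)
    (C : ℕ → ℝ) (Send : ℝ) (pC pD s : ℕ → ℝ) (hx : Optimal P T C Send pC pD s)
    (t₁ t₂ : ℕ) (ht₁ : 1 ≤ t₁) (h12 : t₁ < t₂) (ht₂ : t₂ ≤ T)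
    (hd : 0 < pD t₁) (hc : pC t₂ = 0) (hslack : pD t₂ < P.PD)
    (hs : ∀ t : ℕ, t₁ ≤ t → t ≤ t₂ - 1 → s t < P.Shi) :
    P.ρ ^ (t₂ - t₁) * C t₂ ≤ C t₁ := by
  obtain ⟨⟨hs0, hfeas⟩, hTend, hopt⟩ := hx
  obtain ⟨hΔt, hρ, hρ1, hηC, hηC1, hηD, hηD1, hPC, hPD, hSS, hS1, hS2⟩ := hP
  have ht₂1 : 1 ≤ t₂ := le_trans ht₁ h12.le
  have ht₁T : t₁ ≤ T := le_trans h12.le ht₂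
  have h1 := hfeas t₁ ht₁ ht₁T
  have hpC1 : pC t₁ = 0 := by
    rcases mul_eq_zero.mp h1.2.2.2.2.2.2.2 with h | h
    · exact h
    · exact absurd h (ne_of_gt hd)
  have hne : (Finset.Icc t₁ (t₂ - 1)).Nonempty :=
    ⟨t₁, Finset.mem_Icc.mpr ⟨le_refl _, by omega⟩⟩
  set m := (Finset.Icc t₁ (t₂ - 1)).inf' hne (fun t => P.Shi - s t) with hm_def
  have hm : 0 < m := by
    rw [hm_def, Finset.lt_inf'_iff]
    intro t ht
    rw [Finset.mem_Icc] at ht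
    have := hs t ht.1 ht.2
    linarith
  have hm_le : ∀ t, t₁ ≤ t → t ≤ t₂ - 1 → m ≤ P.Shi - s t := by
    intro t h1' h2'
    exact Finset.inf'_le _ (Finset.mem_Icc.mpr ⟨h1', h2'⟩)
  set ε := min (min (pD t₁) (P.PD - pD t₂)) (P.ηD * m / P.Δt) with hε_def
  have hε0 : 0 < ε :=
    lt_min (lt_min hd (by linarith)) (div_pos (mul_pos hηD hm) hΔt)
  have hε1 : ε ≤ pD t₁ := le_trans (min_le_left _ _) (min_le_left _ _)
  have hε2 : ε ≤ P.PD - pD t₂ := le_trans (min_le_left _ _) (min_le_right _ _)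
  set bump := P.Δt * ε / P.ηD with hbump_def
  have hε3 : bump ≤ m := by
    rw [hbump_def, div_le_iff₀ hηD]
    have h' : ε * P.Δt ≤ (P.ηD * m / P.Δt) * P.Δt :=
      mul_le_mul_of_nonneg_right (min_le_right _ _) hΔt.le
    rw [div_mul_cancel₀ _ (ne_of_gt hΔt)] at h'
    linarith
  have hbump0 : 0 < bump := div_pos (mul_pos hΔt hε0) hηD
  have hbump_eq : bump * P.ηD = P.Δt * ε := div_mul_cancel₀ _ (ne_of_gt hηD)
  set k := t₂ - t₁ with hk_def
  set qD : ℕ → ℝ := fun t =>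
    if t = t₁ then pD t₁ - ε else if t = t₂ then pD t₂ + P.ρ ^ k * ε else pD t with hqD_def
  set r : ℕ → ℝ := fun t =>
    if t₁ ≤ t ∧ t < t₂ then s t + P.ρ ^ (t - t₁) * bump else s t with hr_def
  have hρpow_pos : ∀ n : ℕ, 0 < P.ρ ^ n := fun n => pow_pos hρ n
  have hρpow_le1 : ∀ n : ℕ, P.ρ ^ n ≤ 1 := fun n => pow_le_one₀ hρ.le hρ1
  have hr_eq : ∀ t, ¬ (t₁ ≤ t ∧ t < t₂) → r t = s t := by
    intro t ht
    simp only [hr_def]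
    rw [if_neg ht]
  have hr_eq' : ∀ t, t₁ ≤ t → t < t₂ → r t = s t + P.ρ ^ (t - t₁) * bump := by
    intro t h1' h2'
    simp only [hr_def]
    rw [if_pos ⟨h1', h2'⟩]
  have hqD1 : qD t₁ = pD t₁ - ε := by
    simp [hqD_def]
  have hqD2 : qD t₂ = pD t₂ + P.ρ ^ k * ε := by
    have hne' : t₂ ≠ t₁ := by omega
    simp [hqD_def, hne']
  have hqDo : ∀ t, t ≠ t₁ → t ≠ t₂ → qD t = pD t := by
    intro t hA hB
    simp only [hqD_def]
    rw [if_neg hA, if_neg hB]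
  clear hqD_def hr_def hε_def hm_def h1
  clear_value qD r ε bump m k
  have hfeas' : Feasible P T pC qD r := by
    constructor
    · rw [hr_eq 0 (by omega)]; exact hs0
    · intro t ht1 htT
      obtain ⟨hrec, hlo, hhi, hc0, hcP, hd0, hdP, hcompl⟩ := hfeas t ht1 htT
      have hrbound : P.Slo ≤ r t ∧ r t ≤ P.Shi := by
        by_cases hcase : t₁ ≤ t ∧ t < t₂
        · rw [hr_eq' t hcase.1 hcase.2]
          constructor
          · have := mul_pos (hρpow_pos (t - t₁)) hbump0
            linarith
          · have hmle := hm_le t hcase.1 (by omega)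
            have hb1 : P.ρ ^ (t - t₁) * bump ≤ bump :=
              mul_le_of_le_one_left hbump0.le (hρpow_le1 (t - t₁))
            linarith
        · rw [hr_eq t hcase]; exact ⟨hlo, hhi⟩
      have hqbound : 0 ≤ qD t ∧ qD t ≤ P.PD := by
        by_cases h1' : t = t₁
        · subst h1'
          rw [hqD1]
          constructor <;> linarith
        · by_cases h2' : t = t₂
          · subst h2'
            rw [hqD2]
            have hh : P.ρ ^ k * ε ≤ ε :=
              mul_le_of_le_one_left hε0.le (hρpow_le1 k)
            have := mul_pos (hρpow_pos k) hε0
            constructor <;> linarith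
          · rw [hqDo t h1' h2']; exact ⟨hd0, hdP⟩
      refine ⟨?_, hrbound.1, hrbound.2, hc0, hcP, hqbound.1, hqbound.2, ?_⟩
      · rcases lt_trichotomy t t₁ with hlt | heq | hgt
        · rw [hr_eq t (by omega), hr_eq (t - 1) (by omega),
            hqDo t (by omega) (by omega)]
          exact hrec
        · subst heq
          rw [hr_eq' t le_rfl h12, hr_eq (t - 1) (by omega), hqD1,
            Nat.sub_self, pow_zero, hrec]
          linear_combination hbump_def
        · rcases lt_trichotomy t t₂ with hlt2 | heq2 | hgt2
          · rw [hr_eq' t (by omega) hlt2, hr_eq' (t - 1) (by omega) (by omega),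
              hqDo t (by omega) (by omega), hrec]
            have hp : t - t₁ = (t - 1 - t₁) + 1 := by omega
            rw [hp, pow_succ]
            ring
          · subst heq2
            rw [hr_eq t (by omega), hr_eq' (t - 1) (by omega) (by omega), hqD2, hrec]
            have hp : k = (t - 1 - t₁) + 1 := by omega
            rw [hp, pow_succ]
            linear_combination (-(P.ρ ^ (t - 1 - t₁) * P.ρ)) * hbump_def
          · rw [hr_eq t (by omega), hr_eq (t - 1) (by omega),
              hqDo t (by omega) (by omega)]
            exact hrec
      · by_cases h1' : t = t₁
        · subst h1'
          rw [hpC1, zero_mul]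
        · by_cases h2' : t = t₂
          · subst h2'
            rw [hc, zero_mul]
          · rw [hqDo t h1' h2']
            exact hcompl
  have hle := hopt pC qD r hfeas' (by rw [hr_eq T (by omega)]; exact hTend)
  have hdiff : profit P T C pC pD - profit P T C pC qD
      = P.Δt * ε * (C t₁ - P.ρ ^ k * C t₂) := by
    unfold profit
    rw [← Finset.sum_sub_distrib]
    have hstep : ∀ t ∈ Finset.Icc 1 T,
        P.Δt * C t * (pD t - pC t) - P.Δt * C t * (qD t - pC t)
          = P.Δt * C t * (pD t - qD t) := by
      intro t _; ring
    rw [Finset.sum_congr rfl hstep]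
    have hsub : ({t₁, t₂} : Finset ℕ) ⊆ Finset.Icc 1 T := by
      intro x hx
      simp only [Finset.mem_insert, Finset.mem_singleton] at hx
      rcases hx with h | h <;> subst h <;> rw [Finset.mem_Icc] <;> omega
    rw [← Finset.sum_subset hsub]
    · rw [Finset.sum_pair (by omega : t₁ ≠ t₂), hqD1, hqD2]
      ring
    · intro x _ hxn
      simp only [Finset.mem_insert, Finset.mem_singleton, not_or] at hxn
      rw [hqDo x hxn.1 hxn.2]
      ring
  have hX : 0 ≤ C t₁ - P.ρ ^ k * C t₂ := by
    have h0 : 0 ≤ P.Δt * ε * (C t₁ - P.ρ ^ k * C t₂) := by linarith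
    by_contra hneg
    push_neg at hneg
    have hlt : P.Δt * ε * (C t₁ - P.ρ ^ k * C t₂) < 0 :=
      mul_neg_of_pos_of_neg (mul_pos hΔt hε0) (by linarith)
    linarith
  linarith
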